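/- The lexicographic square is quasi-Lindelöf (indeed it is compact, and every compact space is quasi-Lindelöf), but it is not ccc; hence quasi-Lindelöf does not imply ccc. -/

import Mathlib

def QuasiLindelof (X : Type*) [TopologicalSpace X] : Prop :=
  ∀ C : Set X, IsClosed C → ∀ U : Set (Set X), (∀ u ∈ U, IsOpen u) → C ⊆ ⋃₀ U →
    ∃ U' ⊆ U, U'.Countable ∧ C ⊆ closure (⋃₀ U')

def CCC (X : Type*) [TopologicalSpace X] : Prop :=
  ∀ S : Set (Set X), (∀ u ∈ S, IsOpen u ∧ u.Nonempty) →
    S.Pairwise (fun u v => Disjoint u v) → S.Countable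

/-- The lexicographic square: `[0,1] × [0,1]` with the lexicographic order. -/
abbrev LexSquare : Type := Lex ((Set.Icc (0:ℝ) 1) × (Set.Icc (0:ℝ) 1))

/-- The order topology on the lexicographic square. -/
noncomputable instance : TopologicalSpace LexSquare := Preorder.topology LexSquare

instance : OrderTopology LexSquare := ⟨rfl⟩

section LexComplete

variable {α β : Type*} [CompleteLinearOrder α] [CompleteLinearOrder β]

noncomputable instance lexSupSet : SupSet (Lex (α × β)) :=
  ⟨fun S =>
    toLex (sSup ((fun p => (ofLex p).1) '' S),
      sSup {b | toLex (sSup ((fun p => (ofLex p).1) '' S), b) ∈ S})⟩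

theorem isLUB_lex_sSup (S : Set (Lex (α × β))) : IsLUB S (sSup S) := by
  set a := sSup ((fun p => (ofLex p).1) '' S) with ha
  constructor
  · intro z hz
    have h1 : (ofLex z).1 ≤ a := le_sSup ⟨z, hz, rfl⟩
    rcases lt_or_eq_of_le h1 with h | h
    · show toLex (ofLex z) ≤ _
      exact Prod.Lex.le_iff.mpr (Or.inl h)
    · show toLex (ofLex z) ≤ _
      refine Prod.Lex.le_iff.mpr (Or.inr ⟨h, le_sSup ?_⟩)
      show toLex (a, (ofLex z).2) ∈ S
      have : toLex (a, (ofLex z).2) = z := by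
        rw [← h]
        exact congrArg toLex (Prod.ext rfl rfl)
      rwa [this]
  · intro w hw
    have hfst : ∀ z ∈ S, (ofLex z).1 ≤ (ofLex w).1 := by
      intro z hz
      rcases (Prod.Lex.le_iff (x := z) (y := w)).mp (hw hz) with h | h
      · exact h.le
      · exact h.1.le
    have h1 : a ≤ (ofLex w).1 := sSup_le (by rintro x ⟨z, hz, rfl⟩; exact hfst z hz)
    rcases lt_or_eq_of_le h1 with h | h
    · exact Prod.Lex.le_iff.mpr (Or.inl h)
    · refine Prod.Lex.le_iff.mpr (Or.inr ⟨h, sSup_le ?_⟩)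
      intro b hb
      have := hw hb
      rcases Prod.Lex.le_iff.mp this with h' | h'
      · simp only [ofLex_toLex] at h'
        rw [← ha, h] at h'
        exact absurd h' (lt_irrefl _)
      · simpa using h'.2

noncomputable instance lexCompleteLattice : CompleteLattice (Lex (α × β)) where
  __ := (inferInstance : Lattice (Lex (α × β)))
  __ := (inferInstance : BoundedOrder (Lex (α × β)))
  sSup := SupSet.sSup
  isLUB_sSup S := isLUB_lex_sSup S
  sInf S := sSup (lowerBounds S)
  isGLB_sInf S := ⟨fun b hb => (isLUB_lex_sSup (lowerBounds S)).2 (fun x hx => hx hb),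
    fun b hb => (isLUB_lex_sSup (lowerBounds S)).1 hb⟩

noncomputable instance lexCompleteLinearOrder : CompleteLinearOrder (Lex (α × β)) :=
  { lexCompleteLattice, Prod.Lex.instLinearOrder _ _, LinearOrder.toBiheytingAlgebra _ with }

end LexComplete

instance : Fact ((0:ℝ) ≤ 1) := ⟨zero_le_one⟩

noncomputable instance : CompleteLinearOrder LexSquare := lexCompleteLinearOrder

instance lexSquare_compact : CompactSpace LexSquare := by infer_instance

theorem compact_quasiLindelof (X : Type) [TopologicalSpace X] [CompactSpace X] :
    QuasiLindelof X := by
  intro C hC U hU hcov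
  have hCc : IsCompact C := hC.isCompact
  obtain ⟨t, ht⟩ := hCc.elim_finite_subcover (fun u : U => (u : Set X))
    (fun u => hU u u.2) (by rwa [← Set.sUnion_eq_iUnion])
  refine ⟨(fun u : U => (u : Set X)) '' ↑t, ?_, ?_, ?_⟩
  · rintro _ ⟨u, _, rfl⟩; exact u.2
  · exact (t.finite_toSet.image _).countable
  · refine subset_trans ?_ subset_closure
    intro x hx
    obtain ⟨u, hu, hxu⟩ := Set.mem_iUnion₂.mp (ht hx)
    exact ⟨u, ⟨u, hu, rfl⟩, hxu⟩

theorem lexSquare_not_ccc : ¬ CCC LexSquare := by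
  intro h
  set I := Set.Icc (0:ℝ) 1
  set l0 : I := ⟨0, by constructor <;> norm_num⟩
  set l1 : I := ⟨1, by constructor <;> norm_num⟩
  set lh : I := ⟨1/2, by constructor <;> norm_num⟩
  set f : I → Set LexSquare := fun x => Set.Ioo (toLex (x, l0)) (toLex (x, l1)) with hf
  have hmem : ∀ x : I, toLex (x, lh) ∈ f x := by
    intro x
    constructor
    · exact Prod.Lex.lt_iff.mpr (Or.inr ⟨rfl, by
        show l0 < lh
        exact Subtype.mk_lt_mk.mpr (by norm_num)⟩)
    · exact Prod.Lex.lt_iff.mpr (Or.inr ⟨rfl, by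
        show lh < l1
        exact Subtype.mk_lt_mk.mpr (by norm_num)⟩)
  have hfst : ∀ (x : I) (p : LexSquare), p ∈ f x → (ofLex p).1 = x := by
    intro x p hp
    obtain ⟨h1, h2⟩ := hp
    have hle : x ≤ (ofLex p).1 := by
      rcases (Prod.Lex.lt_iff (y := p)).mp h1 with h | h
      · exact h.le
      · exact h.1.le
    have hge : (ofLex p).1 ≤ x := by
      rcases (Prod.Lex.lt_iff (x := p)).mp h2 with h | h
      · exact h.le
      · exact h.1.le
    exact le_antisymm hge hle
  have hdisj : ∀ x y : I, x ≠ y → Disjoint (f x) (f y) := by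
    intro x y hxy
    rw [Set.disjoint_left]
    intro p hx hy
    exact hxy ((hfst x p hx).symm.trans (hfst y p hy))
  have hinj : Function.Injective f := by
    intro x y hxy
    by_contra hne
    exact Set.not_disjoint_iff.mpr ⟨_, hmem x, hxy ▸ hmem x⟩ (hdisj x y hne)
  have hcnt : (Set.range f).Countable := by
    apply h
    · rintro u ⟨x, rfl⟩
      exact ⟨isOpen_Ioo, ⟨_, hmem x⟩⟩
    · rintro u ⟨x, rfl⟩ v ⟨y, rfl⟩ huv
      exact hdisj x y (fun e => huv (e ▸ rfl))
  have : (Set.univ : Set I).Countable := by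
    have := hcnt.preimage hinj
    rwa [Set.preimage_range] at this
  have hIcnt : Countable I := Set.countable_univ_iff.mp this
  have : (Cardinal.mk I) ≤ Cardinal.aleph0 := Cardinal.mk_le_aleph0
  rw [Cardinal.mk_Icc_real (by norm_num : (0:ℝ) < 1)] at this
  exact absurd this (not_le.mpr Cardinal.aleph0_lt_continuum)

/-- Every compact space is quasi-Lindelöf; the lexicographic square is compact, hence
quasi-Lindelöf, yet it is not ccc. In particular quasi-Lindelöf does not imply ccc. -/
theorem lexSquare_quasiLindelof_not_ccc :
    (∀ (X : Type) [TopologicalSpace X] [CompactSpace X], QuasiLindelof X) ∧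
      CompactSpace LexSquare ∧ QuasiLindelof LexSquare ∧ ¬ CCC LexSquare := by
  exact ⟨compact_quasiLindelof, lexSquare_compact,
    compact_quasiLindelof _, lexSquare_not_ccc⟩
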